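/- Let σ, z ∈ ℂ with |σ| = 1 and |z| < 1, let λ ∈ ℝ, and let g ∈ ℂ. If Re(σ·g/(σ − z)²) ≥ (λ/2)·(1 − |z|²)/|σ − z|², then Re(g·conj(z))/(1 − |z|²) ≤ Re(g/(σ − z)) − λ/2. (This is the key pointwise estimate, applied with g = G(φ_t(z)) for the infinitesimal generator G, in the proof of Theorem 4.1; it rests on the identity conj(σ)·conj(z)·(σ − z)²/(1 − |z|²) = 1 − conj(σ)·z − |σ − z|²/(1 − |z|²).) -/

import Mathlib

open Filter Set

/-- The inverse hyperbolic tangent. -/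
noncomputable def arctanh (x : ℝ) : ℝ := (1 / 2) * Real.log ((1 + x) / (1 - x))

/-- The hyperbolic distance of the unit disc:
`d_𝔻(z, w) = arctanh |(z - w)/(1 - conj z · w)|`. -/
noncomputable def dD (z w : ℂ) : ℝ :=
  arctanh (‖(z - w) / (1 - (starRingEnd ℂ) z * w)‖)

def unitDisc : Set ℂ := {z : ℂ | ‖z‖ < 1}

/-- The key pointwise estimate in the proof of Theorem 4.1: if
`Re(σ g / (σ - z)²) ≥ (λ/2)(1 - |z|²)/|σ - z|²`, then
`Re(g conj z)/(1 - |z|²) ≤ Re(g/(σ - z)) - λ/2`. -/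
theorem stmt13 (σ z g : ℂ) (hσ : ‖σ‖ = 1) (hz : ‖z‖ < 1)
    (lam : ℝ)
    (hineq : (lam / 2) * ((1 - ‖z‖ ^ 2) / ‖σ - z‖ ^ 2) ≤
      (σ * g / (σ - z) ^ 2).re) :
    (g * (starRingEnd ℂ) z).re / (1 - ‖z‖ ^ 2) ≤
      (g / (σ - z)).re - lam / 2 := by
  have hs : σ - z ≠ 0 := by
    intro h
    rw [sub_eq_zero] at h
    rw [h] at hσ
    exact absurd hσ (ne_of_lt hz)
  have ha : (0:ℝ) < 1 - ‖z‖ ^ 2 := by nlinarith [norm_nonneg z]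
  have hss : (0:ℝ) < ‖σ - z‖ ^ 2 := by
    have := norm_pos_iff.mpr hs
    positivity
  have hσ1 : σ * (starRingEnd ℂ) σ = 1 := by
    rw [Complex.mul_conj, ← Complex.sq_norm, hσ]; norm_num
  have hσ0 : σ ≠ 0 := by rintro rfl; simp at hσ1
  have hw : (starRingEnd ℂ) σ = σ⁻¹ :=
    eq_inv_of_mul_eq_one_left (by rw [mul_comm]; exact hσ1)
  have hzz : ((‖z‖ ^ 2 : ℝ) : ℂ) = z * (starRingEnd ℂ) z := by
    rw [Complex.mul_conj, Complex.sq_norm]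
  have hsz : ((‖σ - z‖ ^ 2 : ℝ) : ℂ) = (σ - z) * (starRingEnd ℂ) (σ - z) := by
    rw [Complex.mul_conj, Complex.sq_norm]
  have ha' : ((1 - ‖z‖ ^ 2 : ℝ) : ℂ) ≠ 0 := by exact_mod_cast ne_of_gt ha
  have ha'' : (1 : ℂ) - z * (starRingEnd ℂ) z ≠ 0 := by
    rw [← hzz]; push_cast at ha' ⊢; exact ha'
  have keyC : g * (starRingEnd ℂ) z / ((1 - ‖z‖ ^ 2 : ℝ) : ℂ) =
      g / (σ - z) -
        ((‖σ - z‖ ^ 2 / (1 - ‖z‖ ^ 2) : ℝ) : ℂ) *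
          (σ * g / (σ - z) ^ 2) := by
    rw [Complex.ofReal_div, Complex.ofReal_sub, Complex.ofReal_one, hzz, hsz, map_sub, hw]
    have hD : (1:ℂ) - (starRingEnd ℂ) z * z ≠ 0 := by rwa [mul_comm]
    field_simp
    ring
  have key : (g * (starRingEnd ℂ) z).re / (1 - ‖z‖ ^ 2) =
      (g / (σ - z)).re -
        (‖σ - z‖ ^ 2 / (1 - ‖z‖ ^ 2)) * (σ * g / (σ - z) ^ 2).re := by
    have h := congrArg Complex.re keyC
    rw [Complex.div_ofReal_re, Complex.sub_re, Complex.re_ofReal_mul] at h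
    exact h
  rw [key]
  have hpos : (0:ℝ) < ‖σ - z‖ ^ 2 / (1 - ‖z‖ ^ 2) := by positivity
  have h2 : lam / 2 ≤
      (‖σ - z‖ ^ 2 / (1 - ‖z‖ ^ 2)) * (σ * g / (σ - z) ^ 2).re := by
    have := mul_le_mul_of_nonneg_left hineq (le_of_lt hpos)
    calc lam / 2 = (‖σ - z‖ ^ 2 / (1 - ‖z‖ ^ 2)) *
        ((lam / 2) * ((1 - ‖z‖ ^ 2) / ‖σ - z‖ ^ 2)) := by
          field_simp
      _ ≤ _ := this
  linarith
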